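/- Fix 1 ≤ t ≤ T, and suppose x_t ∈ X minimizes ∑_{τ=1}^{t−1} ℓ_τ(x) over x ∈ X and x_{t+1} ∈ X minimizes ∑_{τ=1}^{t} ℓ_τ(x) over x ∈ X. Then the per-step instantaneous regret satisfies ℓ_t(x_t) − ℓ_t(x_{t+1}) ≤ 2L²/(α·(2t − 1)). -/

import Mathlib

/-- At a minimizer of a function satisfying a `μ`-strong-convexity inequality on a
convex set, the function grows at least quadratically. -/
lemma min_strong_growth {E : Type*} [NormedAddCommGroup E] [NormedSpace ℝ E]
    {X : Set E} (hXconv : Convex ℝ X) {f : E → ℝ} {μ : ℝ}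
    (hineq : ∀ x ∈ X, ∀ y ∈ X, ∀ a b : ℝ, 0 ≤ a → 0 ≤ b → a + b = 1 →
      f (a • x + b • y) ≤ a * f x + b * f y - a * b * (μ / 2 * ‖x - y‖ ^ 2))
    {xs : E} (hxs : xs ∈ X) (hmin : ∀ y ∈ X, f xs ≤ f y) :
    ∀ y ∈ X, f xs + μ / 2 * ‖xs - y‖ ^ 2 ≤ f y := by
  intro y hy
  set C : ℝ := μ / 2 * ‖xs - y‖ ^ 2 with hC
  have key : ∀ n : ℕ, f xs + (1 - 1 / (n + 1 : ℝ)) * C ≤ f y := by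
    intro n
    set b : ℝ := 1 / (n + 1 : ℝ) with hb
    have hb0 : 0 < b := by positivity
    have hb1 : b ≤ 1 := by
      rw [hb, div_le_one (by positivity)]; linarith [Nat.cast_nonneg (α := ℝ) n]
    have hmem : (1 - b) • xs + b • y ∈ X := hXconv hxs hy (by linarith) hb0.le (by ring)
    have h := hineq xs hxs y hy (1 - b) b (by linarith) hb0.le (by ring)
    have h2 := hmin _ hmem
    rw [← hC] at h
    have h3 : b * (f xs + (1 - b) * C) ≤ b * f y := by nlinarith [h, h2]
    have := (mul_le_mul_iff_right₀ hb0).mp h3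
    linarith
  have htend : Filter.Tendsto (fun n : ℕ => f xs + (1 - 1 / (n + 1 : ℝ)) * C)
      Filter.atTop (nhds (f xs + C)) := by
    have h0 : Filter.Tendsto (fun n : ℕ => 1 / (n + 1 : ℝ)) Filter.atTop (nhds 0) :=
      tendsto_one_div_add_atTop_nhds_zero_nat
    have := ((h0.const_sub 1).mul_const C).const_add (f xs)
    simpa using this
  exact le_of_tendsto htend (Filter.Eventually.of_forall key)

/-- **FTL per-step instantaneous regret bound.**
If each `ℓ τ` is `α`-strongly convex and `L`-Lipschitz on the nonempty convex
set `X ⊆ ℝ^d`, `x t ∈ X` minimizes `∑_{τ=1}^{t-1} ℓ τ` over `X` and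
`x (t+1) ∈ X` minimizes `∑_{τ=1}^{t} ℓ τ` over `X`, then
`ℓ t (x t) - ℓ t (x (t+1)) ≤ 2L² / (α (2t - 1))`. -/
theorem ftl_per_step_regret
    {d : ℕ} (X : Set (EuclideanSpace ℝ (Fin d)))
    (hXne : X.Nonempty) (hXconv : Convex ℝ X)
    (α L : ℝ) (hα : 0 < α) (hL : 0 ≤ L)
    (T : ℕ) (ℓ : ℕ → EuclideanSpace ℝ (Fin d) → ℝ)
    (hsc : ∀ τ ∈ Finset.Icc 1 T, StrongConvexOn X α (ℓ τ))
    (hlip : ∀ τ ∈ Finset.Icc 1 T, ∀ x ∈ X, ∀ y ∈ X, |ℓ τ x - ℓ τ y| ≤ L * ‖x - y‖)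
    (t : ℕ) (ht1 : 1 ≤ t) (htT : t ≤ T)
    (xt xt1 : EuclideanSpace ℝ (Fin d)) (hxt : xt ∈ X) (hxt1 : xt1 ∈ X)
    (hxtmin : ∀ y ∈ X, ∑ τ ∈ Finset.Icc 1 (t - 1), ℓ τ xt ≤ ∑ τ ∈ Finset.Icc 1 (t - 1), ℓ τ y)
    (hxt1min : ∀ y ∈ X, ∑ τ ∈ Finset.Icc 1 t, ℓ τ xt1 ≤ ∑ τ ∈ Finset.Icc 1 t, ℓ τ y) :
    ℓ t xt - ℓ t xt1 ≤ 2 * L ^ 2 / (α * (2 * (t : ℝ) - 1)) := by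
  -- strong convexity inequality for partial sums
  have hsum : ∀ (s : Finset ℕ), s ⊆ Finset.Icc 1 T →
      ∀ x ∈ X, ∀ y ∈ X, ∀ a b : ℝ, 0 ≤ a → 0 ≤ b → a + b = 1 →
      (∑ τ ∈ s, ℓ τ (a • x + b • y)) ≤ a * (∑ τ ∈ s, ℓ τ x) + b * (∑ τ ∈ s, ℓ τ y)
        - a * b * ((s.card * α) / 2 * ‖x - y‖ ^ 2) := by
    intro s hs x hx y hy a b ha hb hab
    have h : ∀ τ ∈ s, ℓ τ (a • x + b • y)
        ≤ a * ℓ τ x + b * ℓ τ y - a * b * (α / 2 * ‖x - y‖ ^ 2) := by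
      intro τ hτ
      have := (hsc τ (hs hτ)).2 hx hy ha hb hab
      simpa [smul_eq_mul] using this
    calc (∑ τ ∈ s, ℓ τ (a • x + b • y))
        ≤ ∑ τ ∈ s, (a * ℓ τ x + b * ℓ τ y - a * b * (α / 2 * ‖x - y‖ ^ 2)) :=
          Finset.sum_le_sum h
      _ = a * (∑ τ ∈ s, ℓ τ x) + b * (∑ τ ∈ s, ℓ τ y)
            - a * b * ((s.card * α) / 2 * ‖x - y‖ ^ 2) := by
          rw [Finset.sum_sub_distrib, Finset.sum_add_distrib, ← Finset.mul_sum,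
            ← Finset.mul_sum, Finset.sum_const, nsmul_eq_mul]
          ring
  have hsub1 : Finset.Icc 1 (t - 1) ⊆ Finset.Icc 1 T :=
    Finset.Icc_subset_Icc le_rfl (le_trans (Nat.sub_le t 1) htT)
  have hsub2 : Finset.Icc 1 t ⊆ Finset.Icc 1 T := Finset.Icc_subset_Icc le_rfl htT
  have hcard1 : (Finset.Icc 1 (t - 1)).card = t - 1 := by simp
  have hcard2 : (Finset.Icc 1 t).card = t := by simp
  -- growth at the two minimizers
  have h1 := min_strong_growth hXconv
    (f := fun x => ∑ τ ∈ Finset.Icc 1 (t - 1), ℓ τ x)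
    (μ := ((t : ℝ) - 1) * α)
    (by intro x hx y hy a b ha hb hab
        have := hsum _ hsub1 x hx y hy a b ha hb hab
        rw [hcard1] at this
        have hc : ((t - 1 : ℕ) : ℝ) = (t : ℝ) - 1 := by
          push_cast [Nat.cast_sub ht1]; ring
        rw [hc] at this
        exact this)
    hxt hxtmin xt1 hxt1
  have h2 := min_strong_growth hXconv
    (f := fun x => ∑ τ ∈ Finset.Icc 1 t, ℓ τ x)
    (μ := (t : ℝ) * α)
    (by intro x hx y hy a b ha hb hab
        have := hsum _ hsub2 x hx y hy a b ha hb hab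
        rw [hcard2] at this
        exact this)
    hxt1 hxt1min xt hxt
  -- split the sum up to t
  have hsplit : ∀ x, (∑ τ ∈ Finset.Icc 1 t, ℓ τ x)
      = (∑ τ ∈ Finset.Icc 1 (t - 1), ℓ τ x) + ℓ t x := by
    intro x
    obtain ⟨t', rfl⟩ := Nat.exists_eq_add_of_le ht1
    rw [Nat.add_sub_cancel_left, add_comm 1 t']
    exact Finset.sum_Icc_succ_top (Nat.le_add_left 1 t') _
  rw [hsplit xt1, hsplit xt] at h2
  set D : ℝ := ‖xt - xt1‖ with hD
  have hDnn : 0 ≤ D := norm_nonneg _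
  rw [norm_sub_rev xt1 xt] at h2
  -- combine: (2t-1)α/2 * D^2 ≤ ℓ t xt - ℓ t xt1 ≤ L * D
  have hlow : ((2 * (t : ℝ) - 1) * α) / 2 * D ^ 2 ≤ ℓ t xt - ℓ t xt1 := by
    nlinarith [h1, h2]
  have hup : ℓ t xt - ℓ t xt1 ≤ L * D := by
    have := hlip t (Finset.mem_Icc.mpr ⟨ht1, htT⟩) xt hxt xt1 hxt1
    calc ℓ t xt - ℓ t xt1 ≤ |ℓ t xt - ℓ t xt1| := le_abs_self _
      _ ≤ L * ‖xt - xt1‖ := this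
      _ = L * D := rfl
  have htpos : (0 : ℝ) < 2 * (t : ℝ) - 1 := by
    have : (1 : ℝ) ≤ (t : ℝ) := by exact_mod_cast ht1
    linarith
  have hden : (0 : ℝ) < α * (2 * (t : ℝ) - 1) := by positivity
  -- D ≤ 2L / ((2t-1)α)
  have hDle : D ≤ 2 * L / ((2 * (t : ℝ) - 1) * α) := by
    rcases eq_or_lt_of_le hDnn with h | h
    · rw [← h]; positivity
    · have h3 : ((2 * (t : ℝ) - 1) * α) / 2 * D ^ 2 ≤ L * D := le_trans hlow hup
      rw [le_div_iff₀ (by positivity)]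
      nlinarith
  calc ℓ t xt - ℓ t xt1 ≤ L * D := hup
    _ ≤ L * (2 * L / ((2 * (t : ℝ) - 1) * α)) := by
        exact mul_le_mul_of_nonneg_left hDle hL
    _ = 2 * L ^ 2 / (α * (2 * (t : ℝ) - 1)) := by
        field_simp
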